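/- Suppose N ≠ ∅ and C ∪ L ≠ ∅. Define x* by x*_j = (β_j / ∑_{m∈L∪C} β_m) · R for all j ∈ C, and x*_{ij} = (β_j / ∑_{m∈L∪C} β_m) · R · exp(α_i / (1 + ∑_{k∈L} β_k)) / (∑_{m∈N} exp(α_m / (1 + ∑_{k∈L} β_k))) for all i ∈ N and all j ∈ L. Fix i ∈ N and j ∈ L. Then the partial derivative of B at x* with respect to the coordinate x_{ij} exists and equals λ := −(∑_{m∈N} exp(α_m/(1 + ∑_{k∈L} β_k)))^{1 + ∑_{k∈L} β_k} · (∑_{k∈L∪C} β_k)^{1 + ∑_{k∈L∪C} β_k} / (R^{1 + ∑_{k∈L∪C} β_k} · ∏_{k∈L∪C} β_k^{β_k}). In particular, ∂B/∂x_{ij}(x*) = −β_j · exp(α_i) / (x*_{ij} · ∏_{k∈C} (x*_k)^{β_k} · ∏_{k∈L} (x*_{ik})^{β_k}) = λ. -/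

import Mathlib

open Real Finset

/-- The function `B(x) = ∑_{i∈N} exp(α_i) / (∏_{j∈L} x_{ij}^{β_j} · ∏_{j∈C} x_j^{β_j})`. -/
noncomputable def Bfun {N L C : Type*} [Fintype N] [Fintype L] [Fintype C]
    (α : N → ℝ) (β : L ⊕ C → ℝ) (x : (N → L → ℝ) × (C → ℝ)) : ℝ :=
  ∑ i : N, Real.exp (α i) /
    ((∏ j : L, x.1 i j ^ β (Sum.inl j)) * ∏ j : C, x.2 j ^ β (Sum.inr j))

/-- The overall pickpocket probability `P(x) = B(x) / (1 + B(x))`. -/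
noncomputable def Pfun {N L C : Type*} [Fintype N] [Fintype L] [Fintype C]
    (α : N → ℝ) (β : L ⊕ C → ℝ) (x : (N → L → ℝ) × (C → ℝ)) : ℝ :=
  Bfun α β x / (1 + Bfun α β x)

/-- A budget allocation has all entries strictly positive. -/
def PosAlloc {N L C : Type*} (x : (N → L → ℝ) × (C → ℝ)) : Prop :=
  (∀ i j, 0 < x.1 i j) ∧ ∀ j, 0 < x.2 j

/-- A budget allocation is feasible: positive entries, total spend at most `R`. -/
def FeasAlloc {N L C : Type*} [Fintype N] [Fintype L] [Fintype C]
    (R : ℝ) (x : (N → L → ℝ) × (C → ℝ)) : Prop :=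
  PosAlloc x ∧ (∑ i : N, ∑ j : L, x.1 i j) + ∑ j : C, x.2 j ≤ R

/-- The candidate optimal budget allocation `x*`. -/
noncomputable def xstar {N L C : Type*} [Fintype N] [Fintype L] [Fintype C]
    (R : ℝ) (α : N → ℝ) (β : L ⊕ C → ℝ) : (N → L → ℝ) × (C → ℝ) :=
  (fun i j => β (Sum.inl j) / (∑ m : L ⊕ C, β m) * R *
      (Real.exp (α i / (1 + ∑ k : L, β (Sum.inl k))) /
        ∑ m : N, Real.exp (α m / (1 + ∑ k : L, β (Sum.inl k)))),
   fun j => β (Sum.inr j) / (∑ m : L ⊕ C, β m) * R)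

theorem stmt_12 {N L C : Type*} [Fintype N] [Fintype L] [Fintype C]
    [DecidableEq N] [DecidableEq L]
    [Nonempty N] [Nonempty (L ⊕ C)]
    (R : ℝ) (hR : 0 < R) (α : N → ℝ) (hα : ∀ i, 0 ≤ α i)
    (β : L ⊕ C → ℝ) (hβ : ∀ j, 0 < β j) (i : N) (j : L)
    (lam : ℝ)
    (hlam : lam = -(((∑ m : N, Real.exp (α m / (1 + ∑ k : L, β (Sum.inl k))))
            ^ (1 + ∑ k : L, β (Sum.inl k)) *
          (∑ k : L ⊕ C, β k) ^ (1 + ∑ k : L ⊕ C, β k)) /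
        (R ^ (1 + ∑ k : L ⊕ C, β k) * ∏ k : L ⊕ C, β k ^ β k))) :
    HasDerivAt
      (fun t : ℝ => Bfun α β
        (Function.update (xstar R α β).1 i
          (Function.update ((xstar R α β).1 i) j t), (xstar R α β).2))
      lam ((xstar R α β).1 i j) ∧
    -(β (Sum.inl j) * Real.exp (α i)) /
        ((xstar R α β).1 i j * (∏ k : C, (xstar R α β).2 k ^ β (Sum.inr k)) *
          ∏ k : L, (xstar R α β).1 i k ^ β (Sum.inl k)) = lam := by
  have hLne : Nonempty L := ⟨j⟩
  set BL := ∑ k : L, β (Sum.inl k) with hBLdef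
  set S := ∑ k : L ⊕ C, β k with hSdef
  have hBLpos : 0 < BL := Finset.sum_pos (fun k _ => hβ _) Finset.univ_nonempty
  have hSpos : 0 < S := Finset.sum_pos (fun k _ => hβ _) Finset.univ_nonempty
  set E := ∑ m : N, Real.exp (α m / (1 + BL)) with hEdef
  have hEpos : 0 < E := Finset.sum_pos (fun m _ => Real.exp_pos _) Finset.univ_nonempty
  have hx1 : ∀ (i' : N) (k : L), (xstar R α β).1 i' k
      = β (Sum.inl k) / S * R * (Real.exp (α i' / (1 + BL)) / E) := fun _ _ => rfl
  have hx2 : ∀ c : C, (xstar R α β).2 c = β (Sum.inr c) / S * R := fun _ => rfl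
  have hx1pos : ∀ (i' : N) (k : L), 0 < (xstar R α β).1 i' k := by
    intro i' k; rw [hx1]
    have := hβ (Sum.inl k); have := Real.exp_pos (α i' / (1 + BL)); positivity
  have hx2pos : ∀ c : C, 0 < (xstar R α β).2 c := by
    intro c; rw [hx2]; have := hβ (Sum.inr c); positivity
  set t0 := (xstar R α β).1 i j with ht0def
  set PC := ∏ k : C, (xstar R α β).2 k ^ β (Sum.inr k) with hPCdef
  set PL := ∏ k : L, (xstar R α β).1 i k ^ β (Sum.inl k) with hPLdef
  set Q := ∏ k ∈ Finset.univ \ {j}, (xstar R α β).1 i k ^ β (Sum.inl k) with hQdef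
  have ht0pos : 0 < t0 := hx1pos i j
  have hPCpos : 0 < PC := Finset.prod_pos fun k _ => Real.rpow_pos_of_pos (hx2pos k) _
  have hQpos : 0 < Q := Finset.prod_pos fun k _ => Real.rpow_pos_of_pos (hx1pos i k) _
  have hPL : PL = Q * t0 ^ β (Sum.inl j) := by
    rw [hPLdef, Finset.prod_eq_prod_diff_singleton_mul (Finset.mem_univ j)]
  have hPLpos : 0 < PL := by
    rw [hPL]; positivity
  set d := -(β (Sum.inl j) * Real.exp (α i)) / (t0 * PC * PL) with hddef
  have hdval : -d = β (Sum.inl j) * Real.exp (α i) / (t0 * PC * PL) := by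
    rw [hddef]; ring
  have hlam' : -lam = E ^ (1 + BL) * S ^ (1 + S) / (R ^ (1 + S) * ∏ k : L ⊕ C, β k ^ β k) := by
    rw [hlam, neg_neg]
  have hprodβpos : 0 < ∏ k : L ⊕ C, β k ^ β k :=
    Finset.prod_pos fun k _ => Real.rpow_pos_of_pos (hβ k) _
  have hdpos : 0 < -d := by
    rw [hdval]
    exact div_pos (mul_pos (hβ _) (Real.exp_pos _)) (mul_pos (mul_pos ht0pos hPCpos) hPLpos)
  have hlampos : 0 < -lam := by rw [hlam']; positivity
  -- log computations
  have hlog1 : ∀ (i' : N) (k : L), Real.log ((xstar R α β).1 i' k)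
      = Real.log (β (Sum.inl k)) - Real.log S + Real.log R + (α i' / (1 + BL) - Real.log E) := by
    intro i' k
    rw [hx1, Real.log_mul (by have := hβ (Sum.inl k); positivity)
        (by have := Real.exp_pos (α i' / (1 + BL)); positivity),
      Real.log_mul (by have := hβ (Sum.inl k); positivity) hR.ne',
      Real.log_div (hβ (Sum.inl k)).ne' hSpos.ne',
      Real.log_div (Real.exp_ne_zero _) hEpos.ne', Real.log_exp]
  have hlog2 : ∀ c : C, Real.log ((xstar R α β).2 c)
      = Real.log (β (Sum.inr c)) - Real.log S + Real.log R := by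
    intro c
    rw [hx2, Real.log_mul (by have := hβ (Sum.inr c); positivity) hR.ne',
      Real.log_div (hβ (Sum.inr c)).ne' hSpos.ne']
  have hlogPC : Real.log PC = ∑ c : C, β (Sum.inr c) *
      (Real.log (β (Sum.inr c)) - Real.log S + Real.log R) := by
    rw [hPCdef, Real.log_prod (fun c _ => (Real.rpow_pos_of_pos (hx2pos c) _).ne')]
    exact Finset.sum_congr rfl fun c _ => by rw [Real.log_rpow (hx2pos c), hlog2]
  have hlogPL : Real.log PL = ∑ k : L, β (Sum.inl k) *
      (Real.log (β (Sum.inl k)) - Real.log S + Real.log R + (α i / (1 + BL) - Real.log E)) := by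
    rw [hPLdef, Real.log_prod (fun k _ => (Real.rpow_pos_of_pos (hx1pos i k) _).ne')]
    exact Finset.sum_congr rfl fun k _ => by rw [Real.log_rpow (hx1pos i k), hlog1]
  have hlogd : Real.log (-d) = Real.log (β (Sum.inl j)) + α i
      - (Real.log t0 + Real.log PC + Real.log PL) := by
    rw [hdval, Real.log_div (by have := hβ (Sum.inl j); have := Real.exp_pos (α i); positivity)
        (by positivity),
      Real.log_mul (by positivity) hPLpos.ne', Real.log_mul ht0pos.ne' hPCpos.ne',
      Real.log_mul (hβ (Sum.inl j)).ne' (Real.exp_ne_zero _), Real.log_exp]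
  have hloglam : Real.log (-lam) = ((1 + BL) * Real.log E + (1 + S) * Real.log S)
      - ((1 + S) * Real.log R + ∑ k : L ⊕ C, β k * Real.log (β k)) := by
    rw [hlam', Real.log_div (by positivity) (by positivity),
      Real.log_mul (by positivity) (by positivity),
      Real.log_mul (by positivity) hprodβpos.ne',
      Real.log_rpow hEpos, Real.log_rpow hSpos, Real.log_rpow hR,
      Real.log_prod (fun k _ => (Real.rpow_pos_of_pos (hβ k) _).ne')]
    congr 2
    exact Finset.sum_congr rfl fun k _ => by rw [Real.log_rpow (hβ k)]
  have hkey : d = lam := by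
    have hlogeq : Real.log (-d) = Real.log (-lam) := by
      rw [hlogd, hloglam, hlogPC, hlogPL, hlog1 i j]
      have hS' : S = BL + ∑ c : C, β (Sum.inr c) := by
        rw [hSdef, Fintype.sum_sum_type, ← hBLdef]
      have hsum1 : ∑ k : L ⊕ C, β k * Real.log (β k)
          = (∑ k : L, β (Sum.inl k) * Real.log (β (Sum.inl k)))
            + ∑ c : C, β (Sum.inr c) * Real.log (β (Sum.inr c)) :=
        Fintype.sum_sum_type _
      have e1 : ∑ c : C, β (Sum.inr c) * (Real.log (β (Sum.inr c)) - Real.log S + Real.log R)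
          = (∑ c : C, β (Sum.inr c) * Real.log (β (Sum.inr c)))
            - (∑ c : C, β (Sum.inr c)) * Real.log S + (∑ c : C, β (Sum.inr c)) * Real.log R := by
        simp only [mul_sub, mul_add]
        rw [Finset.sum_add_distrib, Finset.sum_sub_distrib, ← Finset.sum_mul, ← Finset.sum_mul]
      have e2 : ∑ k : L, β (Sum.inl k) * (Real.log (β (Sum.inl k)) - Real.log S + Real.log R
            + (α i / (1 + BL) - Real.log E))
          = (∑ k : L, β (Sum.inl k) * Real.log (β (Sum.inl k)))
            - BL * Real.log S + BL * Real.log R + BL * (α i / (1 + BL) - Real.log E) := by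
        simp only [mul_sub, mul_add]
        rw [Finset.sum_add_distrib, Finset.sum_add_distrib, Finset.sum_sub_distrib,
          Finset.sum_sub_distrib, ← Finset.sum_mul, ← Finset.sum_mul, ← Finset.sum_mul,
          ← Finset.sum_mul, ← hBLdef]
      rw [e1, e2, hsum1]
      have hαa : α i = (1 + BL) * (α i / (1 + BL)) := by
        field_simp
      linear_combination hαa + (Real.log R - Real.log S) * hS'
    have : -d = -lam := by
      rw [← Real.exp_log hdpos, ← Real.exp_log hlampos, hlogeq]
    linarith
  refine ⟨?_, hkey⟩
  -- the derivative part
  have hfun : ∀ t : ℝ, Bfun α β (Function.update (xstar R α β).1 i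
        (Function.update ((xstar R α β).1 i) j t), (xstar R α β).2)
      = Real.exp (α i) / (t ^ β (Sum.inl j) * (Q * PC))
        + ∑ m ∈ Finset.univ \ {i}, Real.exp (α m)
            / ((∏ k : L, (xstar R α β).1 m k ^ β (Sum.inl k)) * PC) := by
    intro t
    simp only [Bfun]
    rw [Finset.sum_eq_sum_sdiff_singleton_add (Finset.mem_univ i), add_comm]
    congr 1
    · rw [Function.update_self, Finset.prod_eq_prod_diff_singleton_mul (Finset.mem_univ j),
        Function.update_self]
      have hQ' : ∏ k ∈ Finset.univ \ {j},
          (Function.update ((xstar R α β).1 i) j t) k ^ β (Sum.inl k) = Q := by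
        refine Finset.prod_congr rfl fun k hk => ?_
        rw [Function.update_of_ne (Finset.notMem_singleton.mp (Finset.mem_sdiff.mp hk).2)]
      rw [hQ']
      ring
    · refine Finset.sum_congr rfl fun m hm => ?_
      rw [Function.update_of_ne (Finset.notMem_singleton.mp (Finset.mem_sdiff.mp hm).2)]
  rw [← hkey]
  have h1 : HasDerivAt (fun t : ℝ => t ^ β (Sum.inl j))
      (β (Sum.inl j) * t0 ^ (β (Sum.inl j) - 1)) t0 :=
    Real.hasDerivAt_rpow_const (Or.inl ht0pos.ne')
  have h2 := h1.mul_const (Q * PC)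
  have h3 := ((hasDerivAt_const t0 (Real.exp (α i))).div h2
    (by have : (0:ℝ) < t0 ^ β (Sum.inl j) := Real.rpow_pos_of_pos ht0pos _; positivity)).add_const
    (∑ m ∈ Finset.univ \ {i}, Real.exp (α m)
      / ((∏ k : L, (xstar R α β).1 m k ^ β (Sum.inl k)) * PC))
  have hfe : (fun t : ℝ => Bfun α β (Function.update (xstar R α β).1 i
        (Function.update ((xstar R α β).1 i) j t), (xstar R α β).2))
      = fun t : ℝ => Real.exp (α i) / (t ^ β (Sum.inl j) * (Q * PC))
        + ∑ m ∈ Finset.univ \ {i}, Real.exp (α m)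
            / ((∏ k : L, (xstar R α β).1 m k ^ β (Sum.inl k)) * PC) := funext hfun
  rw [hfe]
  refine h3.congr_deriv ?_
  rw [hddef, hPL, Real.rpow_sub_one ht0pos.ne']
  have hA : (0:ℝ) < t0 ^ β (Sum.inl j) := Real.rpow_pos_of_pos ht0pos _
  field_simp
  ring
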